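/- Let m, n be positive integers, A ∈ ℝ^{m×n}, b ∈ ℝ^m, and let L be a natural number with 0 < L < m. Suppose A satisfies the 2-Absolute Range Property of order L for some ψ ∈ (0,1). Then for all x, y ∈ ℝ^n: ‖|Ax|² − |Ay|²‖₁ ≤ ((1+ψ)/(1−ψ)) · ( ‖|Ax|² − b‖₁ − ‖|Ay|² − b‖₁ + 2·σ²_L(y) ). -/

import Mathlib

open Finset

/-- `sigmaL L v` : the minimum over subsets `T` of cardinality `L` of the sum of `|v i|`
over the complement of `T`, i.e. the sum of all but the `L` largest entries of `|v|`. -/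
noncomputable def sigmaL {m : ℕ} (L : ℕ) (v : Fin m → ℝ) : ℝ :=
  ⨅ T : {T : Finset (Fin m) // T.card = L}, ∑ i ∈ (T : Finset (Fin m))ᶜ, |v i|

theorem stmt_0 (m n : ℕ) (hm : 0 < m) (hn : 0 < n)
    (A : Fin m → Fin n → ℝ) (b : Fin m → ℝ)
    (L : ℕ) (hL0 : 0 < L) (hLm : L < m)
    (ψ : ℝ) (hψ0 : 0 < ψ) (hψ1 : ψ < 1)
    (hARP : ∀ (x y : Fin n → ℝ) (T : Finset (Fin m)), T.card ≤ L →
      ∑ i ∈ T, |(∑ j, A i j * x j) ^ 2 - (∑ j, A i j * y j) ^ 2| ≤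
        ψ * ∑ i ∈ Tᶜ, |(∑ j, A i j * x j) ^ 2 - (∑ j, A i j * y j) ^ 2|) :
    ∀ x y : Fin n → ℝ,
      ∑ i, |(∑ j, A i j * x j) ^ 2 - (∑ j, A i j * y j) ^ 2| ≤
        ((1 + ψ) / (1 - ψ)) *
          ((∑ i, |(∑ j, A i j * x j) ^ 2 - b i|) - (∑ i, |(∑ j, A i j * y j) ^ 2 - b i|)
            + 2 * sigmaL L (fun i => (∑ j, A i j * y j) ^ 2 - b i)) := by
  intro x y
  set u : Fin m → ℝ := fun i => (∑ j, A i j * x j) ^ 2 - b i with hu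
  set v : Fin m → ℝ := fun i => (∑ j, A i j * y j) ^ 2 - b i with hv
  set d : Fin m → ℝ := fun i => (∑ j, A i j * x j) ^ 2 - (∑ j, A i j * y j) ^ 2 with hd
  have hne : Nonempty {T : Finset (Fin m) // T.card = L} := by
    obtain ⟨t, _, ht⟩ := Finset.exists_subset_card_eq (s := (univ : Finset (Fin m))) (n := L)
      (by simpa using hLm.le)
    exact ⟨⟨t, ht⟩⟩
  obtain ⟨T₀, hT₀⟩ := Finite.exists_min
    (fun T : {T : Finset (Fin m) // T.card = L} => ∑ i ∈ (T : Finset (Fin m))ᶜ, |v i|)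
  have hsig : sigmaL L v = ∑ i ∈ (T₀ : Finset (Fin m))ᶜ, |v i| := by
    refine le_antisymm ?_ (le_ciInf hT₀)
    exact ciInf_le (Set.Finite.bddBelow (Set.finite_range _)) T₀
  set T : Finset (Fin m) := (T₀ : Finset (Fin m)) with hT
  -- abbreviations for the partial sums
  set S1 := ∑ i ∈ T, |d i| with hS1
  set S2 := ∑ i ∈ Tᶜ, |d i| with hS2
  have hARP' : S1 ≤ ψ * S2 := hARP x y T (le_of_eq T₀.2)
  have hS2nonneg : 0 ≤ S2 := Finset.sum_nonneg fun i _ => abs_nonneg _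
  -- pointwise inequalities
  have hpt1 : ∀ i ∈ T, |v i| - |d i| ≤ |u i| := by
    intro i _
    have : v i = u i - d i := by simp [hu, hv, hd]; try ring
    calc |v i| - |d i| = |u i - d i| - |d i| := by rw [this]
      _ ≤ (|u i| + |d i|) - |d i| := by
          have := abs_sub (u i) (d i); linarith
      _ = |u i| := by ring
  have hpt2 : ∀ i ∈ Tᶜ, |d i| - |v i| ≤ |u i| := by
    intro i _
    have : d i = u i - v i := by simp [hu, hv, hd]
    calc |d i| - |v i| = |u i - v i| - |v i| := by rw [this]
      _ ≤ (|u i| + |v i|) - |v i| := by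
          have := abs_sub (u i) (v i); linarith
      _ = |u i| := by ring
  have hU : ∑ i, |u i| = ∑ i ∈ T, |u i| + ∑ i ∈ Tᶜ, |u i| :=
    (Finset.sum_add_sum_compl T _).symm
  have hV : ∑ i, |v i| = ∑ i ∈ T, |v i| + ∑ i ∈ Tᶜ, |v i| :=
    (Finset.sum_add_sum_compl T _).symm
  have hD : ∑ i, |d i| = S1 + S2 := (Finset.sum_add_sum_compl T _).symm
  have h1 : ∑ i ∈ T, (|v i| - |d i|) ≤ ∑ i ∈ T, |u i| := Finset.sum_le_sum hpt1
  have h2 : ∑ i ∈ Tᶜ, (|d i| - |v i|) ≤ ∑ i ∈ Tᶜ, |u i| := Finset.sum_le_sum hpt2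
  rw [Finset.sum_sub_distrib] at h1 h2
  have hbr : S2 - S1 ≤
      (∑ i, |u i|) - (∑ i, |v i|) + 2 * sigmaL L v := by
    rw [hsig, hU, hV]
    have : (∑ i ∈ (T₀ : Finset (Fin m))ᶜ, |v i|) = ∑ i ∈ Tᶜ, |v i| := rfl
    rw [this]
    linarith
  have hgoal : ∑ i, |d i| ≤ ((1 + ψ) / (1 - ψ)) *
      ((∑ i, |u i|) - (∑ i, |v i|) + 2 * sigmaL L v) := by
    rw [hD, div_mul_eq_mul_div, le_div_iff₀ (by linarith : (0:ℝ) < 1 - ψ)]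
    nlinarith [mul_le_mul_of_nonneg_left hbr (by linarith : (0:ℝ) ≤ 1 + ψ)]
  exact hgoal
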